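/- Let n ≥ 1 and let K = ℂ(q). For all i,j ∈ {1,…,n} and every integer l, the following q-integer identity holds in K: Σ_{p=1}^{n} [min(p,i)·l] · [(n+1−max(p,i))·l] · [a_{pj}·l] = δ_{ij} · [l]² · [(n+1)·l], where a_{pj} are the entries of the Cartan matrix of type A_n. -/

import Mathlib

/-- The `q`-integer `[m] = (q^m - q^{-m})/(q - q^{-1})` in `K = ℂ(q)`,
where `q = RatFunc.X`. -/
noncomputable def qint (m : ℤ) : RatFunc ℂ :=
  ((RatFunc.X : RatFunc ℂ) ^ m - (RatFunc.X : RatFunc ℂ) ^ (-m)) /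
    ((RatFunc.X : RatFunc ℂ) - (RatFunc.X : RatFunc ℂ)⁻¹)

/-- The Cartan matrix of type `A_n`: `a_{ij} = 2` if `i = j`, `-1` if `|i-j| = 1`,
`0` otherwise (for indices `i, j ∈ {1, …, n}`). -/
def cartanA (i j : ℕ) : ℤ :=
  if i = j then 2 else if i + 1 = j ∨ j + 1 = i then -1 else 0

section
variable {K : Type*} [Field K] {t : K}

lemma cheb (ht : t ≠ 0) (c : ℤ) :
    (t ^ c - t ^ (-c)) * (t ^ (2:ℤ) - t ^ (-2:ℤ)) =
      (t ^ (c-1) - t ^ (-(c-1))) * (t - t⁻¹) + (t ^ (c+1) - t ^ (-(c+1))) * (t - t⁻¹) := by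
  have e1 : t ^ (c-1) = t ^ c * t⁻¹ := by
    rw [zpow_sub₀ ht, zpow_one, div_eq_mul_inv]
  have e2 : t ^ (-(c-1)) = t ^ (-c) * t := by
    rw [neg_sub, sub_eq_add_neg, add_comm, zpow_add₀ ht, zpow_one]
  have e3 : t ^ (c+1) = t ^ c * t := by rw [zpow_add₀ ht, zpow_one]
  have e4 : t ^ (-(c+1)) = t ^ (-c) * t⁻¹ := by
    rw [neg_add, zpow_add₀ ht]; norm_num
  have e5 : t ^ (2:ℤ) = t * t := by norm_num [zpow_two, sq]
  have e6 : t ^ (-2:ℤ) = t⁻¹ * t⁻¹ := by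
    rw [zpow_neg, show (2:ℤ) = 1+1 by norm_num, zpow_add₀ ht, zpow_one, mul_inv]
  rw [e1, e2, e3, e4, e5, e6]; ring

lemma key (ht : t ≠ 0) (a b : ℤ) :
    (t ^ a - t ^ (-a)) * (t ^ b - t ^ (-b)) * (t ^ (2:ℤ) - t ^ (-2:ℤ))
      - (t ^ (a-1) - t ^ (-(a-1))) * (t ^ b - t ^ (-b)) * (t - t⁻¹)
      - (t ^ a - t ^ (-a)) * (t ^ (b-1) - t ^ (-(b-1))) * (t - t⁻¹)
      = (t - t⁻¹) ^ 2 * (t ^ (a+b) - t ^ (-(a+b))) := by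
  have e1 : t ^ (a-1) = t ^ a * t⁻¹ := by rw [zpow_sub₀ ht, zpow_one, div_eq_mul_inv]
  have e2 : t ^ (-(a-1)) = t ^ (-a) * t := by
    rw [neg_sub, sub_eq_add_neg, add_comm, zpow_add₀ ht, zpow_one]
  have e3 : t ^ (b-1) = t ^ b * t⁻¹ := by rw [zpow_sub₀ ht, zpow_one, div_eq_mul_inv]
  have e4 : t ^ (-(b-1)) = t ^ (-b) * t := by
    rw [neg_sub, sub_eq_add_neg, add_comm, zpow_add₀ ht, zpow_one]
  have e5 : t ^ (2:ℤ) = t * t := by norm_num [zpow_two, sq]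
  have e6 : t ^ (-2:ℤ) = t⁻¹ * t⁻¹ := by
    rw [zpow_neg, show (2:ℤ) = 1+1 by norm_num, zpow_add₀ ht, zpow_one, mul_inv]
  have e7 : t ^ (a+b) = t ^ a * t ^ b := zpow_add₀ ht a b
  have e8 : t ^ (-(a+b)) = t ^ (-a) * t ^ (-b) := by rw [neg_add, zpow_add₀ ht]
  rw [e1, e2, e3, e4, e5, e6, e7, e8]
  ring

lemma main_sum (ht : t ≠ 0) (n i j : ℕ) (hi1 : 1 ≤ i) (hi2 : i ≤ n)
    (hj1 : 1 ≤ j) (hj2 : j ≤ n) :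
    ∑ p ∈ Finset.Icc 1 n,
        (t ^ (min p i : ℤ) - t ^ (-(min p i : ℤ))) *
          (t ^ ((n:ℤ)+1-(max p i : ℤ)) - t ^ (-((n:ℤ)+1-(max p i : ℤ)))) *
          (t ^ (cartanA p j) - t ^ (-(cartanA p j))) =
      (if i = j then 1 else 0) * (t - t⁻¹)^2 * (t ^ ((n:ℤ)+1) - t ^ (-((n:ℤ)+1))) := by
  set g : ℕ → K := fun p =>
      (t ^ (min p i : ℤ) - t ^ (-(min p i : ℤ))) *
        (t ^ ((n:ℤ)+1-(max p i : ℤ)) - t ^ (-((n:ℤ)+1-(max p i : ℤ)))) *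
        (t ^ (cartanA p j) - t ^ (-(cartanA p j))) with hg
  have hg0 : g 0 = 0 := by
    have h1 : (((0:ℕ):ℤ) ⊓ ((i:ℕ):ℤ)) = 0 := by omega
    simp only [hg, h1]
    norm_num
  have hgn : g (n+1) = 0 := by
    have h2 : ((n:ℤ)+1 - ((((n+1:ℕ)):ℤ) ⊔ ((i:ℕ):ℤ))) = 0 := by omega
    simp only [hg, h2]
    norm_num
  have step1 : ∑ p ∈ Finset.Icc 1 n, g p = ∑ p ∈ Finset.Icc 0 (n+1), g p := by
    apply Finset.sum_subset
    · intro x hx; simp only [Finset.mem_Icc] at *; omega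
    · intro x hx hx'
      simp only [Finset.mem_Icc] at hx hx'
      have : x = 0 ∨ x = n+1 := by omega
      rcases this with h | h <;> subst h
      · exact hg0
      · exact hgn
  have step2 : ∑ p ∈ Finset.Icc 0 (n+1), g p
      = ∑ p ∈ ({j-1, j, j+1} : Finset ℕ), g p := by
    symm
    apply Finset.sum_subset
    · intro x hx
      simp only [Finset.mem_insert, Finset.mem_singleton] at hx
      simp only [Finset.mem_Icc]
      omega
    · intro x hx hx'
      simp only [Finset.mem_insert, Finset.mem_singleton] at hx'
      push_neg at hx'
      have hc : cartanA x j = 0 := by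
        rw [cartanA, if_neg (by omega), if_neg (by omega)]
      simp only [hg, hc]
      norm_num
  have step3 : ∑ p ∈ ({j-1, j, j+1} : Finset ℕ), g p = g (j-1) + g j + g (j+1) := by
    rw [Finset.sum_insert (by simp only [Finset.mem_insert, Finset.mem_singleton]; omega),
      Finset.sum_insert (by simp only [Finset.mem_singleton]; omega),
      Finset.sum_singleton, add_assoc]
  rw [step1, step2, step3]
  have c1 : cartanA (j-1) j = -1 := by
    rw [cartanA, if_neg (by omega), if_pos (by omega)]
  have c2 : cartanA j j = 2 := by rw [cartanA, if_pos rfl]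
  have c3 : cartanA (j+1) j = -1 := by
    rw [cartanA, if_neg (by omega), if_pos (by omega)]
  have hFm1 : (t ^ (-1:ℤ) - t ^ (-(-1:ℤ))) = -(t - t⁻¹) := by
    rw [neg_neg, zpow_one, zpow_neg, zpow_one]; ring
  have cj1 : ((j-1 : ℕ) : ℤ) = (j:ℤ) - 1 := by omega
  have cj2 : ((j+1 : ℕ) : ℤ) = (j:ℤ) + 1 := by omega
  by_cases hij : i = j
  · subst hij
    have m1 : (((i:ℤ) - 1) ⊓ (i:ℤ)) = (i:ℤ) - 1 := by omega
    have m2 : (((i:ℤ) - 1) ⊔ (i:ℤ)) = (i:ℤ) := by omega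
    have m5 : (((i:ℤ) + 1) ⊓ (i:ℤ)) = (i:ℤ) := by omega
    have m6 : (((i:ℤ) + 1) ⊔ (i:ℤ)) = (i:ℤ) + 1 := by omega
    have m7 : ((i:ℤ) ⊓ (i:ℤ)) = (i:ℤ) := by omega
    have m8 : ((i:ℤ) ⊔ (i:ℤ)) = (i:ℤ) := by omega
    simp only [hg, cj1, cj2, c1, c2, c3, hFm1, m1, m2, m5, m6, m7, m8, if_true]
    have hk := key ht (i:ℤ) ((n:ℤ)+1-(i:ℤ))
    rw [show (i:ℤ) + ((n:ℤ)+1-(i:ℤ)) = (n:ℤ)+1 by ring] at hk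
    rw [show (n:ℤ)+1-((i:ℤ)+1) = ((n:ℤ)+1-(i:ℤ))-1 by ring]
    linear_combination hk
  · rw [if_neg hij]
    rcases lt_or_gt_of_ne hij with hlt | hgt
    · -- i < j : min p i = i on the triple
      have m1 : (((j:ℤ) - 1) ⊓ (i:ℤ)) = (i:ℤ) := by omega
      have m2 : (((j:ℤ) - 1) ⊔ (i:ℤ)) = (j:ℤ) - 1 := by omega
      have m3 : ((j:ℤ) ⊓ (i:ℤ)) = (i:ℤ) := by omega
      have m4 : ((j:ℤ) ⊔ (i:ℤ)) = (j:ℤ) := by omega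
      have m5 : (((j:ℤ) + 1) ⊓ (i:ℤ)) = (i:ℤ) := by omega
      have m6 : (((j:ℤ) + 1) ⊔ (i:ℤ)) = (j:ℤ) + 1 := by omega
      simp only [hg, cj1, cj2, c1, c2, c3, hFm1, m1, m2, m3, m4, m5, m6]
      rw [show (n:ℤ)+1-((j:ℤ)-1) = ((n:ℤ)+1-(j:ℤ))+1 by ring,
        show (n:ℤ)+1-((j:ℤ)+1) = ((n:ℤ)+1-(j:ℤ))-1 by ring]
      linear_combination (t ^ ((i:ℕ):ℤ) - t ^ (-((i:ℕ):ℤ))) * cheb ht ((n:ℤ)+1-(j:ℤ))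
    · -- j < i
      have m1 : (((j:ℤ) - 1) ⊓ (i:ℤ)) = (j:ℤ) - 1 := by omega
      have m2 : (((j:ℤ) - 1) ⊔ (i:ℤ)) = (i:ℤ) := by omega
      have m3 : ((j:ℤ) ⊓ (i:ℤ)) = (j:ℤ) := by omega
      have m4 : ((j:ℤ) ⊔ (i:ℤ)) = (i:ℤ) := by omega
      have m5 : (((j:ℤ) + 1) ⊓ (i:ℤ)) = (j:ℤ) + 1 := by omega
      have m6 : (((j:ℤ) + 1) ⊔ (i:ℤ)) = (i:ℤ) := by omega
      simp only [hg, cj1, cj2, c1, c2, c3, hFm1, m1, m2, m3, m4, m5, m6]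
      linear_combination (t ^ ((n:ℤ)+1-((i:ℕ):ℤ)) - t ^ (-((n:ℤ)+1-((i:ℕ):ℤ)))) *
        cheb ht (j:ℤ)
end

theorem qint_cartan_sum_identity
    (n : ℕ) (hn : 1 ≤ n) (i : ℕ) (hi : i ∈ Finset.Icc 1 n)
    (j : ℕ) (hj : j ∈ Finset.Icc 1 n) (l : ℤ) :
    ∑ p ∈ Finset.Icc 1 n,
        qint ((min p i : ℤ) * l) * qint (((n : ℤ) + 1 - (max p i : ℤ)) * l) *
          qint (cartanA p j * l) =
      (if i = j then 1 else 0) * qint l ^ 2 * qint (((n : ℤ) + 1) * l) := by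
  simp only [Finset.mem_Icc] at hi hj
  have hq : (RatFunc.X : RatFunc ℂ) ≠ 0 := RatFunc.X_ne_zero
  have hd : (RatFunc.X : RatFunc ℂ) - (RatFunc.X : RatFunc ℂ)⁻¹ ≠ 0 := by
    intro h
    have h2 := sub_eq_zero.mp h
    have h1 : (RatFunc.X : RatFunc ℂ) * RatFunc.X = 1 := by
      nth_rewrite 2 [h2]
      exact mul_inv_cancel₀ hq
    have h3 : (Polynomial.X : Polynomial ℂ) * Polynomial.X = 1 := by
      apply IsFractionRing.injective (Polynomial ℂ) (RatFunc ℂ)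
      rw [map_mul, map_one, RatFunc.algebraMap_X]
      exact h1
    have h4 := congrArg (Polynomial.eval 0) h3
    simp at h4
  set t : RatFunc ℂ := RatFunc.X ^ l with htdef
  have ht : t ≠ 0 := zpow_ne_zero _ hq
  have hzp : ∀ m : ℤ, (RatFunc.X : RatFunc ℂ) ^ (m * l) = t ^ m := fun m => by
    rw [htdef, ← zpow_mul, mul_comm]
  have hqint : ∀ m : ℤ,
      qint (m * l) = (t ^ m - t ^ (-m)) / (RatFunc.X - (RatFunc.X : RatFunc ℂ)⁻¹) := by
    intro m
    rw [qint, show -(m*l) = (-m)*l by ring, hzp, hzp]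
  have hql : qint l = (t - t⁻¹) / (RatFunc.X - (RatFunc.X : RatFunc ℂ)⁻¹) := by
    rw [show l = 1 * l from (one_mul l).symm, hqint 1]
    norm_num
  calc ∑ p ∈ Finset.Icc 1 n,
        qint ((min p i : ℤ) * l) * qint (((n : ℤ) + 1 - (max p i : ℤ)) * l) *
          qint (cartanA p j * l)
      = (∑ p ∈ Finset.Icc 1 n,
          (t ^ (min p i : ℤ) - t ^ (-(min p i : ℤ))) *
            (t ^ ((n:ℤ)+1-(max p i : ℤ)) - t ^ (-((n:ℤ)+1-(max p i : ℤ)))) *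
            (t ^ (cartanA p j) - t ^ (-(cartanA p j)))) /
          (RatFunc.X - (RatFunc.X : RatFunc ℂ)⁻¹)^3 := by
        rw [Finset.sum_div]
        refine Finset.sum_congr rfl fun p _ => ?_
        simp only [hqint]
        generalize (RatFunc.X : RatFunc ℂ) - (RatFunc.X : RatFunc ℂ)⁻¹ = d
        ring
    _ = (if i = j then 1 else 0) * qint l ^ 2 * qint (((n : ℤ) + 1) * l) := by
        rw [main_sum ht n i j hi.1 hi.2 hj.1 hj.2, hql, hqint ((n:ℤ)+1)]
        generalize (RatFunc.X : RatFunc ℂ) - (RatFunc.X : RatFunc ℂ)⁻¹ = d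
        ring
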